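/- For all types A1,…,An,B of L^∘: the sequent A1,…,An → B is derivable in L^∘ if and only if the sequent A1·…·An → B (product associated to the left) is derivable in the Hilbert-style calculus L^∘_H. -/
import Mathlib


/-- Types of the Lambek calculus with the cyclic shift `L^∘`, built from
primitive types `P` by `\` (`ldiv A B = A \ B`), `/` (`rdiv B A = B / A`),
`·` (`mul`) and the cyclic shift `^∘` (`circ`). -/
inductive Fm (P : Type) : Type
  | prim : P → Fm P
  | ldiv : Fm P → Fm P → Fm P
  | rdiv : Fm P → Fm P → Fm P
  | mul  : Fm P → Fm P → Fm P
  | circ : Fm P → Fm P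
deriving DecidableEq

open Fm

/-- Derivability of sequents in the Lambek calculus with the cyclic shift `L^∘`.
The Boolean flag indicates whether the rule (cut) may be used:
`Dv P true` is `L^∘` (with cut), `Dv P false` is its cut-free part. -/
inductive Dv (P : Type) : Bool → List (Fm P) → Fm P → Prop
  | ax (c : Bool) (A : Fm P) :
      Dv P c [A] A
  | ldivL (c : Bool) (Γ Δ Pi : List (Fm P)) (A B C : Fm P) :
      Dv P c (Γ ++ B :: Δ) C → Dv P c Pi A → Pi ≠ [] →
      Dv P c (Γ ++ Pi ++ ldiv A B :: Δ) C
  | ldivR (c : Bool) (Pi : List (Fm P)) (A B : Fm P) :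
      Dv P c (A :: Pi) B → Pi ≠ [] →
      Dv P c Pi (ldiv A B)
  | rdivL (c : Bool) (Γ Δ Pi : List (Fm P)) (A B C : Fm P) :
      Dv P c (Γ ++ B :: Δ) C → Dv P c Pi A → Pi ≠ [] →
      Dv P c (Γ ++ rdiv B A :: (Pi ++ Δ)) C
  | rdivR (c : Bool) (Pi : List (Fm P)) (A B : Fm P) :
      Dv P c (Pi ++ [A]) B → Pi ≠ [] →
      Dv P c Pi (rdiv B A)
  | mulL (c : Bool) (Γ Δ : List (Fm P)) (A B C : Fm P) :
      Dv P c (Γ ++ A :: B :: Δ) C →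
      Dv P c (Γ ++ mul A B :: Δ) C
  | mulR (c : Bool) (Pi Psi : List (Fm P)) (A B : Fm P) :
      Dv P c Pi A → Dv P c Psi B → Pi ≠ [] → Psi ≠ [] →
      Dv P c (Pi ++ Psi) (mul A B)
  | circR (c : Bool) (Pi : List (Fm P)) (A : Fm P) :
      Dv P c Pi A →
      Dv P c Pi (circ A)
  | circL (c : Bool) (A B : Fm P) :
      Dv P c [B] (circ A) →
      Dv P c [circ B] (circ A)
  | circC (c : Bool) (Pi Psi : List (Fm P)) (A : Fm P) :
      Dv P c (Pi ++ Psi) (circ A) → Pi ≠ [] → Psi ≠ [] →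
      Dv P c (Psi ++ Pi) (circ A)
  | cut (Γ Δ Pi : List (Fm P)) (A B : Fm P) :
      Dv P true Pi A → Dv P true (Γ ++ A :: Δ) B → Pi ≠ [] →
      Dv P true (Γ ++ Pi ++ Δ) B

/-- The Hilbert-style calculus `L^∘_H`, deriving sequents `A → B` between
single types. -/
inductive DH (P : Type) : Fm P → Fm P → Prop
  | ax (A : Fm P) : DH P A A
  | assocR (A B C : Fm P) : DH P (Fm.mul A (Fm.mul B C)) (Fm.mul (Fm.mul A B) C)
  | assocL (A B C : Fm P) : DH P (Fm.mul (Fm.mul A B) C) (Fm.mul A (Fm.mul B C))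
  | circAx (C : Fm P) : DH P C (Fm.circ C)
  | mulOfRdiv (A B C : Fm P) : DH P A (Fm.rdiv C B) → DH P (Fm.mul A B) C
  | mulOfLdiv (A B C : Fm P) : DH P B (Fm.ldiv A C) → DH P (Fm.mul A B) C
  | rdivOfMul (A B C : Fm P) : DH P (Fm.mul A B) C → DH P A (Fm.rdiv C B)
  | ldivOfMul (A B C : Fm P) : DH P (Fm.mul A B) C → DH P B (Fm.ldiv A C)
  | trans (A B C : Fm P) : DH P A B → DH P B C → DH P A C
  | circMono (A C : Fm P) : DH P A (Fm.circ C) → DH P (Fm.circ A) (Fm.circ C)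
  | circSwap (A B C : Fm P) :
      DH P (Fm.mul A B) (Fm.circ C) → DH P (Fm.mul B A) (Fm.circ C)

section LcircProof
variable {P : Type}

private lemma monoMul {A A' B B' : Fm P} (h1 : DH P A A') (h2 : DH P B B') :
    DH P (Fm.mul A B) (Fm.mul A' B') := by
  apply DH.mulOfRdiv
  refine DH.trans _ A' _ h1 ?_
  apply DH.rdivOfMul
  apply DH.mulOfLdiv
  exact DH.trans _ B' _ h2 (DH.ldivOfMul _ _ _ (DH.ax _))

mutual
private lemma foldl_assoc1 : ∀ (Δ : List (Fm P)) (X B : Fm P),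
    DH P (List.foldl Fm.mul (Fm.mul X B) Δ) (Fm.mul X (List.foldl Fm.mul B Δ))
  | [], _, _ => DH.ax _
  | C :: Δ, X, B =>
    DH.trans _ _ _ (foldl_assoc1 Δ (Fm.mul X B) C)
      (DH.trans _ _ _ (DH.assocL _ _ _) (monoMul (DH.ax _) (foldl_assoc2 Δ B C)))
private lemma foldl_assoc2 : ∀ (Δ : List (Fm P)) (X B : Fm P),
    DH P (Fm.mul X (List.foldl Fm.mul B Δ)) (List.foldl Fm.mul (Fm.mul X B) Δ)
  | [], _, _ => DH.ax _
  | C :: Δ, X, B =>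
    DH.trans _ _ _ (monoMul (DH.ax _) (foldl_assoc1 Δ B C))
      (DH.trans _ _ _ (DH.assocR _ _ _) (foldl_assoc2 Δ (Fm.mul X B) C))
end

private lemma foldl_mono_init : ∀ (Δ : List (Fm P)) {X Y : Fm P}, DH P X Y →
    DH P (List.foldl Fm.mul X Δ) (List.foldl Fm.mul Y Δ)
  | [], _, _, h => h
  | _ :: Δ, _, _, h => foldl_mono_init Δ (monoMul h (DH.ax _))

private lemma p_append1 (A B : Fm P) (Γ Δ : List (Fm P)) :
    DH P (List.foldl Fm.mul A (Γ ++ B :: Δ))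
      (Fm.mul (List.foldl Fm.mul A Γ) (List.foldl Fm.mul B Δ)) := by
  rw [List.foldl_append]; exact foldl_assoc1 Δ _ B

private lemma p_append2 (A B : Fm P) (Γ Δ : List (Fm P)) :
    DH P (Fm.mul (List.foldl Fm.mul A Γ) (List.foldl Fm.mul B Δ))
      (List.foldl Fm.mul A (Γ ++ B :: Δ)) := by
  rw [List.foldl_append]; exact foldl_assoc2 Δ _ B

private lemma repl_nil (Δ : List (Fm P)) {Q Q' : Fm P} {Pi Pi' : List (Fm P)}
    (h : DH P (List.foldl Fm.mul Q Pi) (List.foldl Fm.mul Q' Pi')) :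
    DH P (List.foldl Fm.mul Q (Pi ++ Δ)) (List.foldl Fm.mul Q' (Pi' ++ Δ)) := by
  rw [List.foldl_append, List.foldl_append]; exact foldl_mono_init Δ h

private lemma repl_cons (G : Fm P) (Γ Δ : List (Fm P)) {Q Q' : Fm P} {Pi Pi' : List (Fm P)}
    (h : DH P (List.foldl Fm.mul Q Pi) (List.foldl Fm.mul Q' Pi')) :
    DH P (List.foldl Fm.mul G (Γ ++ (Q :: Pi) ++ Δ))
      (List.foldl Fm.mul G (Γ ++ (Q' :: Pi') ++ Δ)) := by
  have e1 : Γ ++ (Q :: Pi) ++ Δ = Γ ++ Q :: (Pi ++ Δ) := by simp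
  have e2 : Γ ++ (Q' :: Pi') ++ Δ = Γ ++ Q' :: (Pi' ++ Δ) := by simp
  rw [e1, e2, List.foldl_append, List.foldl_append]
  show DH P (List.foldl Fm.mul (Fm.mul (List.foldl Fm.mul G Γ) Q) (Pi ++ Δ))
    (List.foldl Fm.mul (Fm.mul (List.foldl Fm.mul G Γ) Q') (Pi' ++ Δ))
  rw [List.foldl_append, List.foldl_append]
  refine foldl_mono_init Δ ?_
  exact DH.trans _ _ _ (foldl_assoc1 Pi _ Q)
    (DH.trans _ _ _ (monoMul (DH.ax _) h) (foldl_assoc2 Pi' _ Q'))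

/-- Product of a list, with default value for the empty list. -/
private def pf : List (Fm P) → Fm P → Fm P
  | [], d => d
  | A :: Γ, _ => List.foldl Fm.mul A Γ

private theorem sound {c : Bool} {L : List (Fm P)} {B : Fm P} (h : Dv P c L B) :
    ∀ d : Fm P, DH P (pf L d) B := by
  induction h with
  | ax c A =>
    intro d; exact DH.ax _
  | ldivL c Γ Δ Pi A B C h1 h2 hne ih1 ih2 =>
    intro d
    cases Pi with
    | nil => exact absurd rfl hne
    | cons Q Pi1 =>
      have key : DH P (List.foldl Fm.mul Q (Pi1 ++ [Fm.ldiv A B])) (List.foldl Fm.mul B []) := by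
        rw [List.foldl_append]
        exact DH.trans _ _ _ (monoMul (ih2 d) (DH.ax _)) (DH.mulOfLdiv _ _ _ (DH.ax _))
      cases Γ with
      | nil =>
        show DH P (List.foldl Fm.mul Q (Pi1 ++ Fm.ldiv A B :: Δ)) C
        rw [show Pi1 ++ Fm.ldiv A B :: Δ = (Pi1 ++ [Fm.ldiv A B]) ++ Δ by simp]
        exact DH.trans _ _ _ (repl_nil Δ key) (ih1 d)
      | cons G Γ' =>
        show DH P (List.foldl Fm.mul G ((Γ' ++ Q :: Pi1) ++ Fm.ldiv A B :: Δ)) C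
        rw [show (Γ' ++ Q :: Pi1) ++ Fm.ldiv A B :: Δ
            = Γ' ++ (Q :: (Pi1 ++ [Fm.ldiv A B])) ++ Δ by simp]
        refine DH.trans _ _ _ (repl_cons G Γ' Δ key) ?_
        rw [show Γ' ++ (B :: ([] : List (Fm P))) ++ Δ = Γ' ++ B :: Δ by simp]
        exact ih1 d
  | ldivR c Pi A B h1 hne ih =>
    intro d
    cases Pi with
    | nil => exact absurd rfl hne
    | cons Q Pi1 =>
      show DH P (List.foldl Fm.mul Q Pi1) (Fm.ldiv A B)
      apply DH.ldivOfMul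
      exact DH.trans _ _ _ (foldl_assoc2 Pi1 A Q) (ih d)
  | rdivL c Γ Δ Pi A B C h1 h2 hne ih1 ih2 =>
    intro d
    cases Pi with
    | nil => exact absurd rfl hne
    | cons Q Pi1 =>
      have key : DH P (List.foldl Fm.mul (Fm.rdiv B A) (Q :: Pi1)) (List.foldl Fm.mul B []) := by
        show DH P (List.foldl Fm.mul (Fm.mul (Fm.rdiv B A) Q) Pi1) B
        refine DH.trans _ _ _ (foldl_assoc1 Pi1 _ Q) ?_
        exact DH.trans _ _ _ (monoMul (DH.ax _) (ih2 d)) (DH.mulOfRdiv _ _ _ (DH.ax _))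
      cases Γ with
      | nil =>
        show DH P (List.foldl Fm.mul (Fm.rdiv B A) ((Q :: Pi1) ++ Δ)) C
        exact DH.trans _ _ _ (repl_nil Δ key) (ih1 d)
      | cons G Γ' =>
        show DH P (List.foldl Fm.mul G (Γ' ++ Fm.rdiv B A :: ((Q :: Pi1) ++ Δ))) C
        rw [show Γ' ++ Fm.rdiv B A :: ((Q :: Pi1) ++ Δ)
            = Γ' ++ (Fm.rdiv B A :: Q :: Pi1) ++ Δ by simp]
        refine DH.trans _ _ _ (repl_cons G Γ' Δ key) ?_
        rw [show Γ' ++ (B :: ([] : List (Fm P))) ++ Δ = Γ' ++ B :: Δ by simp]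
        exact ih1 d
  | mulL c Γ Δ A B C h1 ih =>
    intro d
    have key : DH P (List.foldl Fm.mul (Fm.mul A B) []) (List.foldl Fm.mul A [B]) := DH.ax _
    cases Γ with
    | nil =>
      show DH P (List.foldl Fm.mul (Fm.mul A B) Δ) C
      have h := repl_nil Δ key
      simp only [List.nil_append] at h
      exact DH.trans _ _ _ h (ih d)
    | cons G Γ' =>
      show DH P (List.foldl Fm.mul G (Γ' ++ Fm.mul A B :: Δ)) C
      rw [show Γ' ++ Fm.mul A B :: Δ = Γ' ++ (Fm.mul A B :: ([] : List (Fm P))) ++ Δ by simp]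
      refine DH.trans _ _ _ (repl_cons G Γ' Δ key) ?_
      rw [show Γ' ++ (A :: [B]) ++ Δ = Γ' ++ A :: B :: Δ by simp]
      exact ih d
  | mulR c Pi Psi A B h1 h2 hne1 hne2 ih1 ih2 =>
    intro d
    cases Pi with
    | nil => exact absurd rfl hne1
    | cons Q Pi1 =>
      cases Psi with
      | nil => exact absurd rfl hne2
      | cons R Psi1 =>
        show DH P (List.foldl Fm.mul Q (Pi1 ++ R :: Psi1)) (Fm.mul A B)
        exact DH.trans _ _ _ (p_append1 Q R Pi1 Psi1) (monoMul (ih1 d) (ih2 d))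
  | circR c Pi A h1 ih =>
    intro d
    exact DH.trans _ _ _ (ih d) (DH.circAx _)
  | circL c A B h1 ih =>
    intro d
    exact DH.circMono _ _ (ih d)
  | circC c Pi Psi A h1 hne1 hne2 ih =>
    intro d
    cases Pi with
    | nil => exact absurd rfl hne1
    | cons Q Pi1 =>
      cases Psi with
      | nil => exact absurd rfl hne2
      | cons R Psi1 =>
        show DH P (List.foldl Fm.mul R (Psi1 ++ Q :: Pi1)) (Fm.circ A)
        refine DH.trans _ _ _ (p_append1 R Q Psi1 Pi1) ?_
        apply DH.circSwap
        refine DH.trans _ _ _ (p_append2 Q R Pi1 Psi1) ?_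
        exact ih d
  | cut Γ Δ Pi A B h1 h2 hne ih1 ih2 =>
    intro d
    cases Pi with
    | nil => exact absurd rfl hne
    | cons Q Pi1 =>
      have key : DH P (List.foldl Fm.mul Q Pi1) (List.foldl Fm.mul A []) := ih1 d
      cases Γ with
      | nil =>
        show DH P (List.foldl Fm.mul Q (Pi1 ++ Δ)) B
        exact DH.trans _ _ _ (repl_nil Δ key) (ih2 d)
      | cons G Γ' =>
        show DH P (List.foldl Fm.mul G ((Γ' ++ Q :: Pi1) ++ Δ)) B
        rw [show (Γ' ++ Q :: Pi1) ++ Δ = Γ' ++ (Q :: Pi1) ++ Δ by simp]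
        refine DH.trans _ _ _ (repl_cons G Γ' Δ key) ?_
        rw [show Γ' ++ (A :: ([] : List (Fm P))) ++ Δ = Γ' ++ A :: Δ by simp]
        exact ih2 d
  | rdivR c Pi A B h1 hne ih =>
    intro d
    cases Pi with
    | nil => exact absurd rfl hne
    | cons Q Pi1 =>
      show DH P (List.foldl Fm.mul Q Pi1) (Fm.rdiv B A)
      apply DH.rdivOfMul
      have h := ih d
      show DH P (Fm.mul (List.foldl Fm.mul Q Pi1) A) B
      have e : pf ((Q :: Pi1) ++ [A]) d = Fm.mul (List.foldl Fm.mul Q Pi1) A := by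
        show List.foldl Fm.mul Q (Pi1 ++ [A]) = _
        rw [List.foldl_append]
        rfl
      rw [e] at h
      exact h

-- completeness direction helpers

private lemma cut1 {Pi : List (Fm P)} {A B : Fm P} (h1 : Dv P true Pi A)
    (h2 : Dv P true [A] B) (hne : Pi ≠ []) : Dv P true Pi B := by
  have := Dv.cut [] [] Pi A B h1 h2 hne
  simpa using this

private lemma dv_pair (A B : Fm P) : Dv P true [A, B] (Fm.mul A B) := by
  have := Dv.mulR true [A] [B] A B (Dv.ax _ _) (Dv.ax _ _) (by simp) (by simp)
  simpa using this

private lemma dv_two {A B C : Fm P} (h : Dv P true [Fm.mul A B] C) : Dv P true [A, B] C := by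
  have := Dv.cut [] [] [A, B] (Fm.mul A B) C (dv_pair A B) h (by simp)
  simpa using this

private lemma dv_mulL1 {A B C : Fm P} (h : Dv P true [A, B] C) :
    Dv P true [Fm.mul A B] C := by
  have := Dv.mulL true [] [] A B C (by simpa using h)
  simpa using this

private theorem dh_to_dv {A B : Fm P} (h : DH P A B) : Dv P true [A] B := by
  induction h with
  | ax A => exact Dv.ax _ _
  | assocR A B C =>
    apply dv_mulL1
    have h3 : Dv P true [A, B, C] (Fm.mul (Fm.mul A B) C) := by
      have := Dv.mulR true [A, B] [C] (Fm.mul A B) C (dv_pair A B) (Dv.ax _ _) (by simp) (by simp)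
      simpa using this
    have := Dv.mulL true [A] [] B C (Fm.mul (Fm.mul A B) C) (by simpa using h3)
    simpa using this
  | assocL A B C =>
    apply dv_mulL1
    have h3 : Dv P true [A, B, C] (Fm.mul A (Fm.mul B C)) := by
      have := Dv.mulR true [A] [B, C] A (Fm.mul B C) (Dv.ax _ _) (dv_pair B C) (by simp) (by simp)
      simpa using this
    have := Dv.mulL true [] [C] A B (Fm.mul A (Fm.mul B C)) (by simpa using h3)
    simpa using this
  | circAx C => exact Dv.circR _ _ _ (Dv.ax _ _)
  | mulOfRdiv A B C h ih =>
    apply dv_mulL1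
    have step1 : Dv P true [Fm.rdiv C B, B] C := by
      have := Dv.rdivL true [] [] [B] B C C (Dv.ax _ _) (Dv.ax _ _) (by simp)
      simpa using this
    have := Dv.cut [] [B] [A] (Fm.rdiv C B) C ih step1 (by simp)
    simpa using this
  | mulOfLdiv A B C h ih =>
    apply dv_mulL1
    have step1 : Dv P true [A, Fm.ldiv A C] C := by
      have := Dv.ldivL true [] [] [A] A C C (Dv.ax _ _) (Dv.ax _ _) (by simp)
      simpa using this
    have := Dv.cut [A] [] [B] (Fm.ldiv A C) C ih step1 (by simp)
    simpa using this
  | rdivOfMul A B C h ih =>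
    exact Dv.rdivR true [A] B C (by simpa using dv_two ih) (by simp)
  | ldivOfMul A B C h ih =>
    exact Dv.ldivR true [B] A C (dv_two ih) (by simp)
  | trans A B C h1 h2 ih1 ih2 => exact cut1 ih1 ih2 (by simp)
  | circMono A C h ih => exact Dv.circL _ _ _ ih
  | circSwap A B C h ih =>
    apply dv_mulL1
    have h2 : Dv P true [A, B] (Fm.circ C) := dv_two ih
    have := Dv.circC true [A] [B] C (by simpa using h2) (by simp) (by simp)
    simpa using this

private lemma dv_prod : ∀ (Γ : List (Fm P)) (A : Fm P),
    Dv P true (A :: Γ) (List.foldl Fm.mul A Γ)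
  | [], A => Dv.ax _ _
  | B :: Γ, A => by
    have ih := dv_prod Γ (Fm.mul A B)
    have := Dv.cut [] Γ [A, B] (Fm.mul A B) (List.foldl Fm.mul (Fm.mul A B) Γ)
      (dv_pair A B) (by simpa using ih) (by simp)
    simpa using this

end LcircProof

/-- Equivalence of the sequent calculus `L^∘` with the Hilbert-style calculus
`L^∘_H`: `A1,…,An → B` is derivable in `L^∘` iff `A1·…·An → B` (product
associated to the left) is derivable in `L^∘_H`. -/
theorem Lcirc_iff_Hilbert (P : Type) (A : Fm P) (Γ : List (Fm P)) (B : Fm P) :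
    Dv P true (A :: Γ) B ↔ DH P (Γ.foldl Fm.mul A) B := by
  constructor
  · intro h
    exact sound h A
  · intro h
    exact cut1 (dv_prod Γ A) (dh_to_dv h) (by simp)
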